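/- Fix an integer b ≥ 2 and let T_n denote the set of even subpowers of b lying in {1, ..., n}. For every positive integer n, |T_n| ≤ 1 + (1/2)·log_b(n) + bn/(b+1). -/

import Mathlib

/-- `x` is an `i`-th subpower of `b`: `x = b^i * y` for some `y ≥ 1` with `b ∤ y`. -/
def IsSubpower (b i x : ℕ) : Prop :=
  ∃ y : ℕ, 0 < y ∧ ¬ b ∣ y ∧ x = b ^ i * y

/-- `x` is an even subpower of `b`. -/
def IsEvenSubpower (b x : ℕ) : Prop :=
  ∃ i : ℕ, Even i ∧ IsSubpower b i x

attribute [local instance] Classical.propDecidable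

lemma count_nondvd (b M : ℕ) : ((Finset.Icc 1 M).filter (fun y => ¬ b ∣ y)).card = M - M / b := by
  have h1 : ((Finset.Icc 1 M).filter (fun y => b ∣ y)).card = M / b := by
    have he : Finset.Icc 1 M = Finset.Ioc 0 M := rfl
    rw [he]
    exact Nat.Ioc_filter_dvd_card_eq_div M b
  have h2 := Finset.card_filter_add_card_filter_not
    (s := Finset.Icc 1 M) (p := fun y => b ∣ y)
  have h3 : (Finset.Icc 1 M).card = M := by simp
  have h4 : M / b ≤ M := Nat.div_le_self M b
  omega

lemma card_subpower_le (b : ℕ) (hb : 2 ≤ b) (n i : ℕ) :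
    ((Finset.Icc 1 n).filter (IsSubpower b i)).card ≤ n / b ^ i - (n / b ^ i) / b := by
  rw [← count_nondvd b (n / b ^ i)]
  apply Finset.card_le_card_of_injOn (fun x => x / b ^ i)
  · intro x hx
    simp only [Finset.mem_coe, Finset.mem_filter, Finset.mem_Icc] at hx ⊢
    obtain ⟨⟨hx1, hxn⟩, y, hy0, hby, rfl⟩ := hx
    have hbpos : 0 < b ^ i := pow_pos (by omega) i
    rw [Nat.mul_div_cancel_left _ hbpos]
    refine ⟨⟨hy0, ?_⟩, hby⟩
    exact Nat.le_div_iff_mul_le hbpos |>.2 (by linarith [hxn, Nat.mul_comm (b ^ i) y])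
  · intro x hx x' hx' hxx
    simp only [Finset.mem_coe, Finset.mem_filter, Finset.mem_Icc] at hx hx'
    obtain ⟨-, y, -, -, rfl⟩ := hx
    obtain ⟨-, y', -, -, rfl⟩ := hx'
    have hbpos : 0 < b ^ i := pow_pos (by omega) i
    simp only [Nat.mul_div_cancel_left _ hbpos] at hxx
    rw [hxx]

lemma card_subpower_le_real (b : ℕ) (hb : 2 ≤ b) (n i : ℕ) :
    (((Finset.Icc 1 n).filter (IsSubpower b i)).card : ℝ) ≤
      (n : ℝ) * ((b : ℝ) - 1) / (b : ℝ) ^ (i + 1) + 1 := by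
  set M := n / b ^ i with hM
  have hB : (2 : ℝ) ≤ (b : ℝ) := by exact_mod_cast hb
  have hB0 : (0 : ℝ) < (b : ℝ) := by linarith
  have h1 : (((Finset.Icc 1 n).filter (IsSubpower b i)).card : ℝ) ≤ ((M - M / b : ℕ) : ℝ) := by
    exact_mod_cast card_subpower_le b hb n i
  have h2 : ((M - M / b : ℕ) : ℝ) = (M : ℝ) - ((M / b : ℕ) : ℝ) := by
    have : M / b ≤ M := Nat.div_le_self M b
    push_cast [this]; ring
  have h3 : (M : ℝ) / (b : ℝ) - 1 ≤ ((M / b : ℕ) : ℝ) := by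
    have hmod : M % b < b := Nat.mod_lt M (by omega)
    have hnat : M < b * (M / b) + b := by
      conv_lhs => rw [← Nat.div_add_mod M b]
      exact Nat.add_lt_add_left hmod _
    have hr : (M : ℝ) < (b : ℝ) * ((M / b : ℕ) : ℝ) + (b : ℝ) := by exact_mod_cast hnat
    rw [sub_le_iff_le_add, div_le_iff₀ hB0]
    nlinarith
  have h4 : (M : ℝ) ≤ (n : ℝ) / (b : ℝ) ^ i := by
    rw [hM]; exact_mod_cast Nat.cast_div_le
  have h5 : (M : ℝ) - ((M : ℝ) / b - 1) = (M : ℝ) * ((b : ℝ) - 1) / b + 1 := by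
    field_simp; ring
  have hbi : (0 : ℝ) < (b : ℝ) ^ i := pow_pos hB0 i
  calc (((Finset.Icc 1 n).filter (IsSubpower b i)).card : ℝ)
      ≤ (M : ℝ) - ((M / b : ℕ) : ℝ) := by rw [← h2]; exact h1
    _ ≤ (M : ℝ) - ((M : ℝ) / b - 1) := by linarith
    _ = (M : ℝ) * ((b : ℝ) - 1) / b + 1 := h5
    _ ≤ ((n : ℝ) / (b : ℝ) ^ i) * ((b : ℝ) - 1) / b + 1 := by
        have : (0 : ℝ) ≤ ((b : ℝ) - 1) / b := div_nonneg (by linarith) (by linarith)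
        gcongr
        linarith
    _ = (n : ℝ) * ((b : ℝ) - 1) / (b : ℝ) ^ (i + 1) + 1 := by
        rw [pow_succ]; field_simp

theorem stmt6 (b : ℕ) (hb : 2 ≤ b) (n : ℕ) (hn : 1 ≤ n) :
    (((Finset.Icc 1 n).filter (IsEvenSubpower b)).card : ℝ) ≤
      1 + (1 / 2) * Real.logb b n + (b : ℝ) * n / ((b : ℝ) + 1) := by
  have hb1 : 1 < b := hb
  have hn0 : n ≠ 0 := by omega
  set L := Nat.log b n with hL
  set m := L / 2 + 1 with hm
  -- subset of biUnion
  have hsub : (Finset.Icc 1 n).filter (IsEvenSubpower b) ⊆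
      (Finset.range m).biUnion (fun j => (Finset.Icc 1 n).filter (IsSubpower b (2 * j))) := by
    intro x hx
    simp only [Finset.mem_filter, Finset.mem_Icc] at hx
    obtain ⟨⟨hx1, hxn⟩, i, hi, hsp⟩ := hx
    obtain ⟨j, rfl⟩ := hi
    have h2j : j + j = 2 * j := by ring
    rw [h2j] at hsp
    obtain ⟨y, hy0, hby, hxy⟩ := hsp
    have hpow : b ^ (2 * j) ≤ n := by
      calc b ^ (2 * j) ≤ b ^ (2 * j) * y := Nat.le_mul_of_pos_right _ hy0
        _ = x := hxy.symm
        _ ≤ n := hxn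
    have hjL : 2 * j ≤ L := (Nat.le_log_iff_pow_le hb1 hn0).2 hpow
    have hjm : j < m := by omega
    simp only [Finset.mem_biUnion, Finset.mem_range, Finset.mem_filter, Finset.mem_Icc]
    exact ⟨j, hjm, ⟨hx1, hxn⟩, y, hy0, hby, hxy⟩
  have hcard1 : (((Finset.Icc 1 n).filter (IsEvenSubpower b)).card : ℝ) ≤
      ∑ j ∈ Finset.range m, (((Finset.Icc 1 n).filter (IsSubpower b (2 * j))).card : ℝ) := by
    have := (Finset.card_le_card hsub).trans (Finset.card_biUnion_le)
    exact_mod_cast this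
  have hB : (2 : ℝ) ≤ (b : ℝ) := by exact_mod_cast hb
  have hB0 : (0 : ℝ) < (b : ℝ) := by linarith
  -- sum bound
  have hcard2 : ∑ j ∈ Finset.range m, (((Finset.Icc 1 n).filter (IsSubpower b (2 * j))).card : ℝ)
      ≤ ∑ j ∈ Finset.range m, ((n : ℝ) * ((b : ℝ) - 1) / (b : ℝ) * ((1 / (b : ℝ) ^ 2) ^ j) + 1) := by
    apply Finset.sum_le_sum
    intro j _
    have := card_subpower_le_real b hb n (2 * j)
    have he : (n : ℝ) * ((b : ℝ) - 1) / (b : ℝ) ^ (2 * j + 1)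
        = (n : ℝ) * ((b : ℝ) - 1) / (b : ℝ) * ((1 / (b : ℝ) ^ 2) ^ j) := by
      rw [pow_add, pow_mul, pow_one, div_pow, one_pow, div_mul_div_comm, mul_one,
        mul_comm (((b : ℝ) ^ 2) ^ j) (b : ℝ)]
    rw [he] at this
    exact this
  have hgeom : ∑ j ∈ Finset.range m, ((1 / (b : ℝ) ^ 2) ^ j) ≤ (1 - 1 / (b : ℝ) ^ 2)⁻¹ := by
    have hr0 : (0 : ℝ) ≤ 1 / (b : ℝ) ^ 2 := by positivity
    have hr1 : 1 / (b : ℝ) ^ 2 < 1 := by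
      rw [div_lt_one (by positivity)]
      nlinarith
    calc ∑ j ∈ Finset.range m, ((1 / (b : ℝ) ^ 2) ^ j)
        ≤ ∑' j : ℕ, ((1 / (b : ℝ) ^ 2) ^ j) :=
          Summable.sum_le_tsum _ (fun j _ => by positivity)
            (summable_geometric_of_lt_one hr0 hr1)
      _ = (1 - 1 / (b : ℝ) ^ 2)⁻¹ := tsum_geometric_of_lt_one hr0 hr1
  have hkey : ∑ j ∈ Finset.range m, ((n : ℝ) * ((b : ℝ) - 1) / (b : ℝ) * ((1 / (b : ℝ) ^ 2) ^ j) + 1)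
      ≤ (b : ℝ) * n / ((b : ℝ) + 1) + m := by
    rw [Finset.sum_add_distrib, ← Finset.mul_sum]
    simp only [Finset.sum_const, Finset.card_range, nsmul_eq_mul, mul_one]
    have hc : (0 : ℝ) ≤ (n : ℝ) * ((b : ℝ) - 1) / (b : ℝ) :=
      div_nonneg (by nlinarith [Nat.cast_nonneg (α := ℝ) n]) (by linarith)
    have h1 : (n : ℝ) * ((b : ℝ) - 1) / (b : ℝ) * ∑ j ∈ Finset.range m, ((1 / (b : ℝ) ^ 2) ^ j)
        ≤ (n : ℝ) * ((b : ℝ) - 1) / (b : ℝ) * (1 - 1 / (b : ℝ) ^ 2)⁻¹ :=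
      mul_le_mul_of_nonneg_left hgeom hc
    have h2 : (n : ℝ) * ((b : ℝ) - 1) / (b : ℝ) * (1 - 1 / (b : ℝ) ^ 2)⁻¹
        = (b : ℝ) * n / ((b : ℝ) + 1) := by
      have h3 : (1 : ℝ) - 1 / (b : ℝ) ^ 2 = ((b : ℝ) ^ 2 - 1) / (b : ℝ) ^ 2 := by
        field_simp
      rw [h3]
      have hne1 : (b : ℝ) + 1 ≠ 0 := by linarith
      have hne2 : (b : ℝ) - 1 ≠ 0 := by linarith
      have hne3 : (b : ℝ) ^ 2 - 1 ≠ 0 := by nlinarith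
      field_simp
      ring
    linarith
  -- m bound
  have hmb : (m : ℝ) ≤ 1 + (1 / 2) * Real.logb b n := by
    have h1 : ((L / 2 : ℕ) : ℝ) ≤ (L : ℝ) / 2 := Nat.cast_div_le
    have h2 : (L : ℝ) ≤ Real.logb b n := by
      have hpow : (b : ℝ) ^ L ≤ (n : ℝ) := by exact_mod_cast Nat.pow_log_le_self b hn0
      have hb1' : (1 : ℝ) < (b : ℝ) := by linarith
      have hb1' : (1 : ℝ) < (b : ℝ) := by linarith
      have := Real.logb_le_logb_of_le hb1' (by positivity : (0:ℝ) < (b:ℝ) ^ L) hpow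
      rwa [Real.logb_pow, Real.logb_self_eq_one hb1', mul_one] at this
    have : (m : ℝ) = ((L / 2 : ℕ) : ℝ) + 1 := by push_cast [hm]; ring
    rw [this]; linarith
  calc (((Finset.Icc 1 n).filter (IsEvenSubpower b)).card : ℝ)
      ≤ (b : ℝ) * n / ((b : ℝ) + 1) + m := le_trans hcard1 (le_trans hcard2 hkey)
    _ ≤ 1 + (1 / 2) * Real.logb b n + (b : ℝ) * n / ((b : ℝ) + 1) := by linarith
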